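/- Let T be a finitary monad on Set and F : Set^T ⥤ Set^T finitary, preserving surjective T-algebra morphisms and sifted colimits, so that φF is a fixed point of F with structure ζ : φF ≅ F(φF). Then (φF, ζ⁻¹) equipped with the operation assigning to each coalgebra c : TX → F(TX) (X finite) its colimit injection inj_c : TX → φF is the initial ffg-Bloom algebra for F. -/

import Mathlib

open CategoryTheory CategoryTheory.Limits

/-- An `F`-coalgebra has free finitely generated carrier. -/
def Pffg (T : Monad (Type)) (F : T.Algebra ⥤ T.Algebra)
    (C : Endofunctor.Coalgebra F) : Prop :=
  ∃ X : Type, Finite X ∧ Nonempty (C.V ≅ T.free.obj X)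

/-- The coalgebra on a free finitely generated carrier, as an object of the full
subcategory of such coalgebras. -/
def ffgObj (T : Monad (Type)) (F : T.Algebra ⥤ T.Algebra) (X : Type) (hX : Finite X)
    (c : T.free.obj X ⟶ F.obj (T.free.obj X)) : ObjectProperty.FullSubcategory (Pffg T F) :=
  ⟨⟨T.free.obj X, c⟩, X, hX, ⟨Iso.refl _⟩⟩

namespace PhiFFG

/-- Any endofunctor of `Type` preserves surjections (using choice). -/
lemma map_surjective (G : Type ⥤ Type) {α β : Type} (e : α ⟶ β)
    (he : Function.Surjective e) : Function.Surjective (G.map e) := by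
  obtain ⟨s, hs⟩ : ∃ s : β ⟶ α, s ≫ e = 𝟙 β :=
    ⟨↾(Function.surjInv he), ConcreteCategory.hom_ext _ _ fun b => Function.surjInv_eq he b⟩
  intro x
  refine ⟨G.map s x, ?_⟩
  rw [← types_comp_apply (G.map s) (G.map e), ← G.map_comp, hs, G.map_id]
  rfl

variable (T : Monad (Type))

/-- The free-algebra morphism induced by a function. -/
def freeHom {Y : Type} {B : T.Algebra} (g : Y → B.A) : T.free.obj Y ⟶ B where
  f := (T : Type ⥤ Type).map (↾g) ≫ B.a
  h := by
    show (T : Type ⥤ Type).map ((T : Type ⥤ Type).map (↾g) ≫ B.a) ≫ B.a =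
      T.μ.app Y ≫ (T : Type ⥤ Type).map (↾g) ≫ B.a
    simp only [Functor.map_comp, Category.assoc, ← B.assoc]
    rw [← Category.assoc, ← Category.assoc]
    congr 1
    exact T.μ.naturality (↾g)

lemma freeHom_comm {Y : Type} {B : T.Algebra} (g : Y → B.A) (y : Y) :
    (freeHom T g).f (T.η.app Y y) = g y := by
  have h1 : (T : Type ⥤ Type).map (↾g) (T.η.app Y y) = T.η.app B.A (g y) :=
    (NatTrans.naturality_apply T.η (↾g) y).symm
  have h2 := ConcreteCategory.congr_hom B.unit (g y)
  show B.a ((T : Type ⥤ Type).map (↾g) (T.η.app Y y)) = g y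
  rw [h1]
  exact h2

lemma freeHom_eta {Y : Type} {B : T.Algebra} (u : T.free.obj Y ⟶ B) :
    freeHom T (fun y => u.f (T.η.app Y y)) = u := by
  ext : 1
  show (T : Type ⥤ Type).map (T.η.app Y ≫ u.f) ≫ B.a = u.f
  have hu : (T : Type ⥤ Type).map u.f ≫ B.a = T.μ.app Y ≫ u.f := u.h
  erw [Functor.map_comp, Category.assoc, hu, ← Category.assoc, T.right_unit,
    Category.id_comp]

lemma freeHom_ext {Y : Type} {B : T.Algebra} (u v : T.free.obj Y ⟶ B)
    (h : ∀ y, u.f (T.η.app Y y) = v.f (T.η.app Y y)) : u = v := by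
  rw [← freeHom_eta T u, ← freeHom_eta T v]
  congr 1
  funext y
  exact h y

variable (F : T.Algebra ⥤ T.Algebra)

/-- Index: coalgebra structures on free algebras over `Fin n`.  A small category. -/
structure Idx where
  n : ℕ
  str : T.free.obj (Fin n) ⟶ F.obj (T.free.obj (Fin n))

instance : Category (Idx T F) where
  Hom j k := { f : T.free.obj (Fin j.n) ⟶ T.free.obj (Fin k.n) //
    j.str ≫ F.map f = f ≫ k.str }
  id j := ⟨𝟙 _, by simp⟩
  comp f g := ⟨f.1 ≫ g.1, by
    rw [F.map_comp, ← Category.assoc, f.2, Category.assoc, g.2, ← Category.assoc]⟩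
  id_comp f := Subtype.ext (Category.id_comp f.1)
  comp_id f := Subtype.ext (Category.comp_id f.1)
  assoc f g h := Subtype.ext (Category.assoc f.1 g.1 h.1)

/-- The base diagram of carriers in `T.Algebra`. -/
def Gb : Idx T F ⥤ T.Algebra where
  obj j := T.free.obj (Fin j.n)
  map f := f.1
  map_id _ := rfl
  map_comp _ _ := rfl

/-- The type of "variables": one copy of `Fin j.n` for every index. -/
def Yt : Type := Σ j : Idx T F, Fin j.n

/-- The big free algebra on all variables. -/
def P : T.Algebra := T.free.obj (Yt T F)

/-- Injection of the `j`-th free algebra into the big one. -/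
def kap (j : Idx T F) : T.free.obj (Fin j.n) ⟶ P T F :=
  T.free.map (↾fun i => (⟨j, i⟩ : Yt T F))

/-- A morphism out of `P` is *good* if it coequalizes all the diagram relations. -/
def Good {B : T.Algebra} (h : P T F ⟶ B) : Prop :=
  ∀ (j k : Idx T F) (f : j ⟶ k), kap T F j ≫ h = f.1 ≫ kap T F k ≫ h

/-- The congruence: smallest identification making all good morphisms factor. -/
def rel (x y : (P T F).A) : Prop :=
  ∀ (B : T.Algebra) (h : P T F ⟶ B), Good T F h → h.f x = h.f y

def st : Setoid (P T F).A where
  r := rel T F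
  iseqv := ⟨fun _ _ _ _ => rfl, fun h B g hg => (h B g hg).symm,
    fun h h' B g hg => (h B g hg).trans (h' B g hg)⟩

/-- The carrier of the colimit. -/
def Wty : Type := Quotient (st T F)

def q : (P T F).A → Wty T F := Quotient.mk (st T F)

lemma q_surjective : Function.Surjective (q T F) := fun w => ⟨w.out, w.out_eq⟩

/-- Good morphisms factor through `q`. -/
lemma good_factor {B : T.Algebra} (h : P T F ⟶ B) (hg : Good T F h) :
    ∃ g : Wty T F → B.A, h.f = ↾(g ∘ q T F) :=
  ⟨Quotient.lift h.f (fun x y hxy => hxy B h hg), rfl⟩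

/-- Key well-definedness: `q ∘ P.a` only depends on `T.map q`. -/
lemma key {t₁ t₂ : (T : Type ⥤ Type).obj (P T F).A}
    (h12 : (T : Type ⥤ Type).map (↾(q T F)) t₁ = (T : Type ⥤ Type).map (↾(q T F)) t₂) :
    q T F ((P T F).a t₁) = q T F ((P T F).a t₂) := by
  apply Quotient.sound
  intro B h hg
  obtain ⟨g, hgf⟩ := good_factor T F h hg
  have e : ∀ t, h.f ((P T F).a t) = B.a ((T : Type ⥤ Type).map h.f t) := by
    intro t
    exact (ConcreteCategory.congr_hom h.h t).symm
  rw [e, e]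
  congr 1
  rw [hgf]
  have : (T : Type ⥤ Type).map (↾(g ∘ q T F)) = (T : Type ⥤ Type).map (↾(q T F)) ≫
      (T : Type ⥤ Type).map (↾g) := by
    rw [← Functor.map_comp]; rfl
  rw [this]
  simp only [types_comp_apply, h12]

/-- Structure map on the quotient. -/
noncomputable def aW : (T : Type ⥤ Type).obj (Wty T F) → Wty T F :=
  fun t => q T F ((P T F).a ((T : Type ⥤ Type).map (↾fun (w : Wty T F) => w.out) t))

lemma mapmap (G : Type ⥤ Type) {α β γ : Type} (f : α → β) (g : β → γ) (x : G.obj α) :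
    G.map (↾g) (G.map (↾f) x) = G.map (↾fun a => g (f a)) x := by
  rw [← types_comp_apply (G.map (↾f)) (G.map (↾g)), ← G.map_comp]
  rfl

lemma aW_comm (t : (T : Type ⥤ Type).obj (P T F).A) :
    aW T F ((T : Type ⥤ Type).map (↾(q T F)) t) = q T F ((P T F).a t) := by
  unfold aW
  apply key
  rw [mapmap, mapmap]
  have he : (fun a => q T F (Quotient.out (q T F a))) = q T F :=
    funext fun x => Quotient.out_eq _
  rw [he]

/-- The colimit algebra. -/
noncomputable def Walg : T.Algebra where
  A := Wty T F
  a := ↾(aW T F)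
  unit := by
    refine ConcreteCategory.hom_ext _ _ fun w => ?_
    obtain ⟨x, rfl⟩ := q_surjective T F w
    show aW T F (T.η.app (Wty T F) (q T F x)) = q T F x
    have h1 : T.η.app (Wty T F) (q T F x) =
        (T : Type ⥤ Type).map (↾(q T F)) (T.η.app (P T F).A x) :=
      NatTrans.naturality_apply T.η (↾(q T F)) x
    rw [h1, aW_comm]
    congr 1
    exact ConcreteCategory.congr_hom (P T F).unit x
  assoc := by
    refine ConcreteCategory.hom_ext _ _ fun tt => ?_
    have hTq : Function.Surjective ((T : Type ⥤ Type).map (↾(q T F))) :=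
      map_surjective _ _ (q_surjective T F)
    have hTTq : Function.Surjective
        ((T : Type ⥤ Type).map ((T : Type ⥤ Type).map (↾(q T F)))) :=
      map_surjective _ _ hTq
    obtain ⟨s, rfl⟩ := hTTq tt
    show aW T F (T.μ.app (Wty T F) _) = aW T F ((T : Type ⥤ Type).map (↾(aW T F)) _)
    have h1 : T.μ.app (Wty T F) ((T : Type ⥤ Type).map ((T : Type ⥤ Type).map (↾(q T F))) s)
        = (T : Type ⥤ Type).map (↾(q T F)) (T.μ.app (P T F).A s) :=
      NatTrans.naturality_apply T.μ (↾(q T F)) s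
    have h2 : (T : Type ⥤ Type).map (↾(aW T F))
          ((T : Type ⥤ Type).map ((T : Type ⥤ Type).map (↾(q T F))) s)
        = (T : Type ⥤ Type).map ((T : Type ⥤ Type).map (↾(q T F)) ≫ ↾(aW T F)) s := by
      rw [Functor.map_comp]; rfl
    have h3 : (T : Type ⥤ Type).map (↾(q T F)) ≫ ↾(aW T F) = (P T F).a ≫ ↾(q T F) :=
      ConcreteCategory.hom_ext _ _ fun t => aW_comm T F t
    rw [h1, aW_comm, h2, h3, Functor.map_comp]
    show q T F ((P T F).a (T.μ.app _ s)) =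
      aW T F ((T : Type ⥤ Type).map (↾(q T F)) ((T : Type ⥤ Type).map (P T F).a s))
    rw [aW_comm]
    congr 1
    exact ConcreteCategory.congr_hom (P T F).assoc s

/-- The quotient map as an algebra morphism. -/
noncomputable def qhom : P T F ⟶ Walg T F where
  f := ↾(q T F)
  h := ConcreteCategory.hom_ext _ _ fun t => aW_comm T F t

/-- Colimit injections. -/
noncomputable def lamb (j : Idx T F) : T.free.obj (Fin j.n) ⟶ Walg T F :=
  kap T F j ≫ qhom T F

lemma lamb_nat {j k : Idx T F} (f : j ⟶ k) : f.1 ≫ lamb T F k = lamb T F j := by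
  ext x
  show q T F _ = q T F _
  apply Quotient.sound
  intro B h hg
  have := congrArg Monad.Algebra.Hom.f (hg j k f)
  exact (ConcreteCategory.congr_hom this x).symm

/-- The base cocone in `T.Algebra`. -/
noncomputable def baseCocone : Cocone (Gb T F) where
  pt := Walg T F
  ι :=
    { app := lamb T F
      naturality := fun j k f => by
        show (Gb T F).map f ≫ lamb T F k = lamb T F j ≫ 𝟙 _
        rw [Category.comp_id]
        exact lamb_nat T F f }

/-- The mediating morphism out of `P` for a base cocone. -/
noncomputable def hs (s : Cocone (Gb T F)) : P T F ⟶ s.pt :=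
  freeHom T (fun y => (s.ι.app y.1).f (T.η.app (Fin y.1.n) y.2))

lemma kap_eta (j : Idx T F) (i : Fin j.n) :
    (kap T F j).f (T.η.app (Fin j.n) i) = T.η.app (Yt T F) (⟨j, i⟩ : Yt T F) := by
  show (T : Type ⥤ Type).map (↾fun i' => (⟨j, i'⟩ : Yt T F)) (T.η.app (Fin j.n) i) = _
  exact (NatTrans.naturality_apply T.η (↾fun i' => (⟨j, i'⟩ : Yt T F)) i).symm

lemma kap_hs (s : Cocone (Gb T F)) (j : Idx T F) : kap T F j ≫ hs T F s = s.ι.app j := by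
  apply freeHom_ext
  intro i
  show (hs T F s).f ((kap T F j).f (T.η.app (Fin j.n) i)) = _
  rw [kap_eta]
  exact freeHom_comm T _ (⟨j, i⟩ : Yt T F)

lemma hs_good (s : Cocone (Gb T F)) : Good T F (hs T F s) := by
  intro j k f
  rw [kap_hs]
  have h2 : kap T F k ≫ hs T F s = s.ι.app k := kap_hs T F s k
  rw [h2]
  have := s.w f
  show s.ι.app j = (Gb T F).map f ≫ s.ι.app k
  rw [this]

/-- Descend a cocone morphism to the quotient. -/
noncomputable def descW (s : Cocone (Gb T F)) : Walg T F ⟶ s.pt where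
  f := ↾(Quotient.lift (hs T F s).f (fun x y hxy => hxy s.pt (hs T F s) (hs_good T F s)))
  h := by
    refine ConcreteCategory.hom_ext _ _ fun t => ?_
    have hTq : Function.Surjective ((T : Type ⥤ Type).map (↾(q T F))) :=
      map_surjective _ _ (q_surjective T F)
    obtain ⟨t', rfl⟩ := hTq t
    set u : Wty T F → s.pt.A :=
      Quotient.lift (hs T F s).f (fun x y hxy => hxy s.pt (hs T F s) (hs_good T F s)) with hu
    show s.pt.a ((T : Type ⥤ Type).map (↾u) ((T : Type ⥤ Type).map (↾(q T F)) t')) =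
      u ((Walg T F).a ((T : Type ⥤ Type).map (↾(q T F)) t'))
    rw [mapmap]
    have h1 : (↾fun a => u (q T F a)) = (hs T F s).f := rfl
    rw [h1]
    have h2 : s.pt.a ((T : Type ⥤ Type).map (hs T F s).f t') = (hs T F s).f ((P T F).a t') :=
      ConcreteCategory.congr_hom (hs T F s).h t'
    rw [h2]
    have h4 : (Walg T F).a ((T : Type ⥤ Type).map (↾(q T F)) t') = q T F ((P T F).a t') :=
      aW_comm T F t'
    rw [h4]
    rfl

/-- The base cocone is a colimit. -/
noncomputable def isColimitBase : IsColimit (baseCocone T F) where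
  desc := descW T F
  fac s j := by
    ext x
    show (descW T F s).f (q T F ((kap T F j).f x)) = (s.ι.app j).f x
    have : (descW T F s).f (q T F ((kap T F j).f x)) = (hs T F s).f ((kap T F j).f x) := rfl
    rw [this]
    exact ConcreteCategory.congr_hom (congrArg Monad.Algebra.Hom.f (kap_hs T F s j)) x
  uniq s m hm := by
    ext w
    obtain ⟨x, rfl⟩ := q_surjective T F w
    have hq : qhom T F ≫ m = hs T F s := by
      apply freeHom_ext
      intro y
      obtain ⟨j, i⟩ := y
      have e1 : T.η.app (Yt T F) (⟨j, i⟩ : Yt T F) = (kap T F j).f (T.η.app (Fin j.n) i) :=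
        (kap_eta T F j i).symm
      show m.f (q T F (T.η.app (Yt T F) (⟨j, i⟩ : Yt T F))) =
        (hs T F s).f (T.η.app (Yt T F) (⟨j, i⟩ : Yt T F))
      rw [e1]
      have e2 : m.f (q T F ((kap T F j).f (T.η.app (Fin j.n) i))) =
          ((baseCocone T F).ι.app j ≫ m).f (T.η.app (Fin j.n) i) := rfl
      rw [e2, hm j]
      have e3 := ConcreteCategory.congr_hom (congrArg Monad.Algebra.Hom.f (kap_hs T F s j)) (T.η.app (Fin j.n) i)
      exact e3.symm
    have := ConcreteCategory.congr_hom (congrArg Monad.Algebra.Hom.f hq) x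
    exact this

/-- The cocone used to induce the coalgebra structure on `W`. -/
noncomputable def Fcocone : Cocone (Gb T F) where
  pt := F.obj (Walg T F)
  ι :=
    { app := fun j => j.str ≫ F.map ((baseCocone T F).ι.app j)
      naturality := fun j k f => by
        show (Gb T F).map f ≫ k.str ≫ F.map ((baseCocone T F).ι.app k) = _ ≫ 𝟙 _
        erw [Category.comp_id]
        show f.1 ≫ k.str ≫ F.map (lamb T F k) = j.str ≫ F.map (lamb T F j)
        rw [← Category.assoc, ← f.2, Category.assoc, ← F.map_comp, lamb_nat T F f] }

/-- The coalgebra structure on `W`. -/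
noncomputable def wstr : Walg T F ⟶ F.obj (Walg T F) :=
  (isColimitBase T F).desc (Fcocone T F)

lemma wfac (j : Idx T F) :
    lamb T F j ≫ wstr T F = j.str ≫ F.map (lamb T F j) :=
  (isColimitBase T F).fac (Fcocone T F) j

/-- `W` as a coalgebra. -/
noncomputable def WC : Endofunctor.Coalgebra F := ⟨Walg T F, wstr T F⟩

/-- The diagram of coalgebras indexed by `Idx`. -/
def Ecal (j : Idx T F) : Endofunctor.Coalgebra F := ⟨T.free.obj (Fin j.n), j.str⟩

/-- Colimit injections as coalgebra morphisms. -/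
noncomputable def lamC (j : Idx T F) : Ecal T F j ⟶ WC T F where
  f := lamb T F j
  h := (wfac T F j).symm

lemma L1 {j k : Idx T F} (g : Ecal T F j ⟶ Ecal T F k) :
    g ≫ lamC T F k = lamC T F j := by
  ext : 1
  show g.f ≫ lamb T F k = lamb T F j
  exact lamb_nat T F (⟨g.f, g.h⟩ : j ⟶ k)

/-- The canonical object of the full subcategory attached to an index. -/
def EJ (j : Idx T F) : ObjectProperty.FullSubcategory (Pffg T F) :=
  ffgObj T F (Fin j.n) (Finite.of_fintype _) j.str

/-- Choice of a presentation of an ffg coalgebra by an index. -/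
noncomputable def pick (j : ObjectProperty.FullSubcategory (Pffg T F)) :
    Σ' (k : Idx T F), j.obj ≅ Ecal T F k := by
  have hp := j.property
  have hfin : Finite hp.choose := hp.choose_spec.1
  have hiso : Nonempty (j.obj.V ≅ T.free.obj hp.choose) := hp.choose_spec.2
  let ψ0 : j.obj.V ≅ T.free.obj hp.choose := hiso.some
  haveI : Fintype hp.choose := Fintype.ofFinite _
  let e : hp.choose ≃ Fin (Fintype.card hp.choose) := Fintype.equivFin _
  let ψ : j.obj.V ≅ T.free.obj (Fin (Fintype.card hp.choose)) :=
    ψ0 ≪≫ T.free.mapIso e.toIso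
  refine ⟨⟨Fintype.card hp.choose, ψ.inv ≫ j.obj.str ≫ F.map ψ.hom⟩,
    Endofunctor.Coalgebra.isoMk ψ ?_⟩
  show j.obj.str ≫ F.map ψ.hom = ψ.hom ≫ ψ.inv ≫ j.obj.str ≫ F.map ψ.hom
  rw [ψ.hom_inv_id_assoc]

noncomputable def idxOf (j : ObjectProperty.FullSubcategory (Pffg T F)) : Idx T F := (pick T F j).1

noncomputable def isoOf (j : ObjectProperty.FullSubcategory (Pffg T F)) :
    (ObjectProperty.ι (Pffg T F)).obj j ≅ Ecal T F (idxOf T F j) :=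
  (pick T F j).2

/-- The cocone over the full subcategory inclusion with point `W`. -/
noncomputable def coalgCocone : Cocone (ObjectProperty.ι (Pffg T F)) where
  pt := WC T F
  ι :=
    { app := fun j => (isoOf T F j).hom ≫ lamC T F (idxOf T F j)
      naturality := fun j j' f => by
        show (ObjectProperty.ι (Pffg T F)).map f ≫
          (isoOf T F j').hom ≫ lamC T F (idxOf T F j') = _ ≫ 𝟙 _
        rw [Category.comp_id]
        have hg := L1 T F ((isoOf T F j).inv ≫
          ((ObjectProperty.ι (Pffg T F)).map f ≫ (isoOf T F j').hom))
        calc (ObjectProperty.ι (Pffg T F)).map f ≫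
              (isoOf T F j').hom ≫ lamC T F (idxOf T F j')
            = (isoOf T F j).hom ≫ ((isoOf T F j).inv ≫
              ((ObjectProperty.ι (Pffg T F)).map f ≫ (isoOf T F j').hom)) ≫
              lamC T F (idxOf T F j') := by
              rw [Category.assoc, Iso.hom_inv_id_assoc, Category.assoc]
          _ = (isoOf T F j).hom ≫ lamC T F (idxOf T F j) := by rw [hg] }

lemma coalgCocone_EJ (k : Idx T F) :
    (coalgCocone T F).ι.app (EJ T F k) = lamC T F k := by
  show (isoOf T F (EJ T F k)).hom ≫ lamC T F (idxOf T F (EJ T F k)) = lamC T F k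
  exact L1 T F ((isoOf T F (EJ T F k)).hom)

/-- Restriction of a coalgebra cocone to the base diagram. -/
def sb (s : Cocone (ObjectProperty.ι (Pffg T F))) : Cocone (Gb T F) where
  pt := s.pt.V
  ι :=
    { app := fun j => (s.ι.app (EJ T F j)).f
      naturality := fun j k f => by
        show (Gb T F).map f ≫ (s.ι.app (EJ T F k)).f = _ ≫ 𝟙 _
        erw [Category.comp_id]
        have hw := s.w (show EJ T F j ⟶ EJ T F k from ObjectProperty.homMk
          (⟨f.1, f.2⟩ : Endofunctor.Coalgebra.Hom (Ecal T F j) (Ecal T F k)))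
        have := congrArg Endofunctor.Coalgebra.Hom.f hw
        exact this }

noncomputable def descC (s : Cocone (ObjectProperty.ι (Pffg T F))) :
    WC T F ⟶ s.pt where
  f := (isColimitBase T F).desc (sb T F s)
  h := by
    apply (isColimitBase T F).hom_ext
    intro j
    show lamb T F j ≫ wstr T F ≫ F.map ((isColimitBase T F).desc (sb T F s)) =
      lamb T F j ≫ (isColimitBase T F).desc (sb T F s) ≫ s.pt.str
    erw [← Category.assoc, wfac, Category.assoc, ← F.map_comp, ← Category.assoc]
    have hfac : lamb T F j ≫ (isColimitBase T F).desc (sb T F s) =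
        (s.ι.app (EJ T F j)).f := (isColimitBase T F).fac (sb T F s) j
    rw [hfac]
    exact (s.ι.app (EJ T F j)).h

lemma lamC_descC (s : Cocone (ObjectProperty.ι (Pffg T F))) (k : Idx T F) :
    lamC T F k ≫ descC T F s = s.ι.app (EJ T F k) := by
  ext : 1
  exact (isColimitBase T F).fac (sb T F s) k

noncomputable def isColimitCoalg : IsColimit (coalgCocone T F) where
  desc := descC T F
  fac s j := by
    show ((isoOf T F j).hom ≫ lamC T F (idxOf T F j)) ≫ _ = s.ι.app j
    rw [Category.assoc, lamC_descC T F s (idxOf T F j)]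
    have hw := s.w (show EJ T F (idxOf T F j) ⟶ j from ObjectProperty.homMk (isoOf T F j).inv)
    have : (isoOf T F j).inv ≫ s.ι.app j = s.ι.app (EJ T F (idxOf T F j)) := hw
    rw [← this, Iso.hom_inv_id_assoc]
  uniq s m hm := by
    ext : 1
    apply (isColimitBase T F).uniq (sb T F s)
    intro k
    show lamb T F k ≫ m.f = (s.ι.app (EJ T F k)).f
    have h1 : lamC T F k ≫ m = s.ι.app (EJ T F k) := by
      rw [← coalgCocone_EJ T F k]
      exact hm (EJ T F k)
    exact congrArg Endofunctor.Coalgebra.Hom.f h1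

end PhiFFG


open PhiFFG

/-- `φF`, the colimit of all `F`-coalgebras with free finitely generated carrier,
whose structure is an isomorphism `ζ`, equipped with the colimit injections as solution
operation, is an ffg-Bloom algebra (solution and functoriality axioms hold), and it is the
initial one: for every ffg-Bloom algebra `(A, a, †)` there is a unique `F`-algebra morphism
`h : (φF, ζ⁻¹) ⟶ (A, a)` preserving solutions. -/
theorem phiF_initial_ffgBloom_algebra
    (T : Monad (Type)) [PreservesFilteredColimits (T : Type ⥤ Type)]
    (F : T.Algebra ⥤ T.Algebra) [PreservesFilteredColimits F]
    (hsurj : ∀ {A B : T.Algebra} (f : A ⟶ B), Function.Surjective f.f →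
      Function.Surjective (F.map f).f)
    (hsift : ∀ (J : Type) (_ : SmallCategory J) (_ : IsSifted J),
      Nonempty (PreservesColimitsOfShape J F))
    [HasColimit (ObjectProperty.ι (Pffg T F))]
    [IsIso (colimit (ObjectProperty.ι (Pffg T F))).str]
    (A : T.Algebra) (a : F.obj A ⟶ A)
    (dag : ∀ (X : Type) (_ : Finite X)
      (c : T.free.obj X ⟶ F.obj (T.free.obj X)), T.free.obj X ⟶ A)
    (hsol : ∀ (X : Type) (hX : Finite X) (c : T.free.obj X ⟶ F.obj (T.free.obj X)),
      dag X hX c = c ≫ F.map (dag X hX c) ≫ a)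
    (hfunct : ∀ (X Y : Type) (hX : Finite X) (hY : Finite Y)
      (c : T.free.obj X ⟶ F.obj (T.free.obj X))
      (d : T.free.obj Y ⟶ F.obj (T.free.obj Y))
      (m : (⟨T.free.obj X, c⟩ : Endofunctor.Coalgebra F) ⟶
        (⟨T.free.obj Y, d⟩ : Endofunctor.Coalgebra F)),
      dag X hX c = m.f ≫ dag Y hY d) :
    -- φF with the colimit injections is itself an ffg-Bloom algebra:
    (∀ (X : Type) (hX : Finite X) (c : T.free.obj X ⟶ F.obj (T.free.obj X)),
      (colimit.ι (ObjectProperty.ι (Pffg T F)) (ffgObj T F X hX c)).f =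
        c ≫ F.map (colimit.ι (ObjectProperty.ι (Pffg T F)) (ffgObj T F X hX c)).f ≫
          inv (colimit (ObjectProperty.ι (Pffg T F))).str) ∧
    (∀ (X Y : Type) (hX : Finite X) (hY : Finite Y)
      (c : T.free.obj X ⟶ F.obj (T.free.obj X))
      (d : T.free.obj Y ⟶ F.obj (T.free.obj Y))
      (m : (⟨T.free.obj X, c⟩ : Endofunctor.Coalgebra F) ⟶
        (⟨T.free.obj Y, d⟩ : Endofunctor.Coalgebra F)),
      (colimit.ι (ObjectProperty.ι (Pffg T F)) (ffgObj T F X hX c)).f =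
        m.f ≫ (colimit.ι (ObjectProperty.ι (Pffg T F)) (ffgObj T F Y hY d)).f) ∧
    -- and it is initial among ffg-Bloom algebras:
    ∃! h : (colimit (ObjectProperty.ι (Pffg T F))).V ⟶ A,
      (colimit (ObjectProperty.ι (Pffg T F))).str ≫ F.map h ≫ a = h ∧
      ∀ (X : Type) (hX : Finite X) (c : T.free.obj X ⟶ F.obj (T.free.obj X)),
        (colimit.ι (ObjectProperty.ι (Pffg T F)) (ffgObj T F X hX c)).f ≫ h =
          dag X hX c := by
  set incl := ObjectProperty.ι (Pffg T F) with hincl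
  refine ⟨?_, ?_, ?_⟩
  · -- solution axiom
    intro X hX c
    have hh : c ≫ F.map (colimit.ι incl (ffgObj T F X hX c)).f =
        (colimit.ι incl (ffgObj T F X hX c)).f ≫ (colimit incl).str :=
      (colimit.ι incl (ffgObj T F X hX c)).h
    erw [← Category.assoc, hh, Category.assoc, IsIso.hom_inv_id, Category.comp_id]
  · -- functoriality axiom
    intro X Y hX hY c d m
    have hw := colimit.w incl (show ffgObj T F X hX c ⟶ ffgObj T F Y hY d from ObjectProperty.homMk m)
    have := congrArg Endofunctor.Coalgebra.Hom.f hw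
    simp only [Endofunctor.Coalgebra.comp_f] at this
    exact this.symm
  · -- initiality
    obtain ⟨Φ, hΦ⟩ : ∃ Φ : colimit incl ≅ WC T F,
        ∀ j, colimit.ι incl j ≫ Φ.hom = (coalgCocone T F).ι.app j :=
      ⟨IsColimit.coconePointUniqueUpToIso (colimit.isColimit incl) (isColimitCoalg T F),
        fun j => IsColimit.comp_coconePointUniqueUpToIso_hom _ _ j⟩
    obtain ⟨hA, hAfac⟩ : ∃ hA : Walg T F ⟶ A, ∀ k : Idx T F,
        lamb T F k ≫ hA = dag (Fin k.n) (Finite.of_fintype _) k.str := by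
      refine ⟨(isColimitBase T F).desc
        ⟨A, ⟨fun k => dag (Fin k.n) (Finite.of_fintype _) k.str, fun j k f => ?_⟩⟩,
        fun k => (isColimitBase T F).fac _ k⟩
      show (Gb T F).map f ≫ dag (Fin k.n) (Finite.of_fintype _) k.str = _ ≫ 𝟙 _
      erw [Category.comp_id]
      exact (hfunct (Fin j.n) (Fin k.n) (Finite.of_fintype _) (Finite.of_fintype _)
        j.str k.str ⟨f.1, f.2⟩).symm
    have hEJι : ∀ k : Idx T F,
        (colimit.ι incl (EJ T F k)).f ≫ Φ.hom.f = lamb T F k := by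
      intro k
      have h1 := congrArg Endofunctor.Coalgebra.Hom.f
        ((hΦ (EJ T F k)).trans (coalgCocone_EJ T F k))
      exact h1
    have hid : Φ.hom.f ≫ Φ.inv.f = 𝟙 ((colimit incl).V) := by
      rw [← Endofunctor.Coalgebra.comp_f, Φ.hom_inv_id]
      rfl
    have JE : ∀ (u v : (colimit incl).V ⟶ A),
        (∀ k : Idx T F, (colimit.ι incl (EJ T F k)).f ≫ u =
          (colimit.ι incl (EJ T F k)).f ≫ v) → u = v := by
      intro u v huv
      have h2 : Φ.inv.f ≫ u = Φ.inv.f ≫ v := by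
        apply (isColimitBase T F).hom_ext
        intro k
        show lamb T F k ≫ Φ.inv.f ≫ u = lamb T F k ≫ Φ.inv.f ≫ v
        calc (lamb T F k ≫ Φ.inv.f ≫ u : (incl.obj (EJ T F k)).V ⟶ A)
            = (colimit.ι incl (EJ T F k)).f ≫ (Φ.hom.f ≫ Φ.inv.f) ≫ u := by
              rw [← hEJι k]; exact Category.assoc _ _ _
          _ = (colimit.ι incl (EJ T F k)).f ≫ u := by rw [hid, Category.id_comp]
          _ = (colimit.ι incl (EJ T F k)).f ≫ v := huv k
          _ = (colimit.ι incl (EJ T F k)).f ≫ (Φ.hom.f ≫ Φ.inv.f) ≫ v := by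
              rw [hid, Category.id_comp]
          _ = (lamb T F k ≫ Φ.inv.f ≫ v : (incl.obj (EJ T F k)).V ⟶ A) := by
              rw [← hEJι k]; exact (Category.assoc _ _ _).symm
      calc u = (Φ.hom.f ≫ Φ.inv.f) ≫ u := by rw [hid, Category.id_comp]
        _ = Φ.hom.f ≫ Φ.inv.f ≫ u := Category.assoc _ _ _
        _ = Φ.hom.f ≫ Φ.inv.f ≫ v := by rw [h2]
        _ = (Φ.hom.f ≫ Φ.inv.f) ≫ v := (Category.assoc _ _ _).symm
        _ = v := by rw [hid, Category.id_comp]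
    have hii : ∀ (X : Type) (hX : Finite X) (c : T.free.obj X ⟶ F.obj (T.free.obj X)),
        (colimit.ι incl (ffgObj T F X hX c)).f ≫ (Φ.hom.f ≫ hA) = dag X hX c := by
      intro X hX c
      have h1 : colimit.ι incl (ffgObj T F X hX c) ≫ Φ.hom =
          (isoOf T F (ffgObj T F X hX c)).hom ≫
            lamC T F (idxOf T F (ffgObj T F X hX c)) := hΦ _
      have h2 : (colimit.ι incl (ffgObj T F X hX c)).f ≫ Φ.hom.f =
          (isoOf T F (ffgObj T F X hX c)).hom.f ≫
            lamb T F (idxOf T F (ffgObj T F X hX c)) := by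
        have := congrArg Endofunctor.Coalgebra.Hom.f h1
        exact this
      erw [← Category.assoc, h2, Category.assoc, hAfac _]
      exact (hfunct X (Fin (idxOf T F (ffgObj T F X hX c)).n) hX (Finite.of_fintype _) c
        ((idxOf T F (ffgObj T F X hX c)).str) (isoOf T F (ffgObj T F X hX c)).hom).symm
    have hiiEJ : ∀ k : Idx T F, (colimit.ι incl (EJ T F k)).f ≫ (Φ.hom.f ≫ hA) =
        dag (Fin k.n) (Finite.of_fintype _) k.str := fun k => hii _ _ _
    refine ⟨Φ.hom.f ≫ hA, ⟨?_, hii⟩, ?_⟩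
    · apply JE
      intro k
      have hstr' : (colimit.ι incl (EJ T F k)).f ≫ (colimit incl).str =
          k.str ≫ F.map (colimit.ι incl (EJ T F k)).f :=
        ((colimit.ι incl (EJ T F k)).h).symm
      calc ((colimit.ι incl (EJ T F k)).f ≫ (colimit incl).str ≫
            F.map (Φ.hom.f ≫ hA) ≫ a : T.free.obj (Fin k.n) ⟶ A)
          = (((colimit.ι incl (EJ T F k)).f ≫ (colimit incl).str) ≫
            F.map (Φ.hom.f ≫ hA) ≫ a : T.free.obj (Fin k.n) ⟶ A) :=
            (Category.assoc _ _ _).symm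
        _ = k.str ≫ F.map ((colimit.ι incl (EJ T F k)).f ≫ (Φ.hom.f ≫ hA)) ≫ a := by
            erw [hstr']
            erw [Category.assoc, ← F.map_comp_assoc]
        _ = k.str ≫ F.map (dag (Fin k.n) (Finite.of_fintype _) k.str) ≫ a := by
            erw [hiiEJ k]
        _ = dag (Fin k.n) (Finite.of_fintype _) k.str := (hsol _ _ _).symm
        _ = ((colimit.ι incl (EJ T F k)).f ≫ (Φ.hom.f ≫ hA) : T.free.obj (Fin k.n) ⟶ A) :=
            (hiiEJ k).symm
    · rintro y ⟨hy1, hy2⟩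
      apply JE
      intro k
      exact (hy2 (Fin k.n) (Finite.of_fintype _) k.str).trans (hiiEJ k).symm
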